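/- Let {μ_X : X ∈ X^n} be probability measures on ℝ absolutely continuous with respect to Lebesgue measure, parametrized by a statistic T(X) with monotone likelihood ratio in T(X). Then {μ_X} satisfies (ε,δ)-DP if and only if for all neighboring X₁, X₂ (Hamming distance 1) and all t ∈ ℝ: μ_{X₁}((−∞,t)) ≤ e^ε μ_{X₂}((−∞,t)) + δ and μ_{X₁}((t,∞)) ≤ e^ε μ_{X₂}((t,∞)) + δ. -/

import Mathlib

open MeasureTheory Real

/-- Core single-crossing lemma, increasing likelihood ratio case: if `f₁/f₂` is
nondecreasing, then the DP inequality on right half-lines and on the whole line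
implies it on every measurable set. -/
lemma key_up (f₁ f₂ : ℝ → ℝ) (h₁0 : ∀ t, 0 ≤ f₁ t) (h₂0 : ∀ t, 0 ≤ f₂ t)
    (hi₁ : Integrable f₁) (hi₂ : Integrable f₂) (hm₁ : Measurable f₁) (hm₂ : Measurable f₂)
    (c δ' : ℝ) (hc : 0 ≤ c) (hδ : 0 ≤ δ')
    (hcross : ∀ s t, s ≤ t → f₁ s * f₂ t ≤ f₁ t * f₂ s)
    (hhalf : ∀ t : ℝ, (∫ x in Set.Ioi t, f₁ x) ≤ c * (∫ x in Set.Ioi t, f₂ x) + δ')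
    (htot : (∫ x, f₁ x) ≤ c * (∫ x, f₂ x) + δ')
    (B : Set ℝ) (hB : MeasurableSet B) :
    (∫ x in B, f₁ x) ≤ c * (∫ x in B, f₂ x) + δ' := by
  set g : ℝ → ℝ := fun x => f₁ x - c * f₂ x with hg_def
  have hg_int : Integrable g := hi₁.sub (hi₂.const_mul c)
  have hg_meas : Measurable g := hm₁.sub (hm₂.const_mul c)
  set U : Set ℝ := {x | 0 < g x} with hU_def
  have hU : MeasurableSet U := measurableSet_lt measurable_const hg_meas
  -- single crossing property
  have hup : ∀ t ∈ U, ∀ s, t ≤ s → 0 ≤ g s := by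
    intro t ht s hts
    have hgt : c * f₂ t < f₁ t := sub_pos.mp ht
    rcases eq_or_lt_of_le (h₂0 t) with h2t | h2t
    · -- f₂ t = 0, so f₁ t > 0, hence f₂ s = 0
      have hf1t : 0 < f₁ t := by nlinarith
      have h1 : f₁ t * f₂ s ≤ f₁ s * f₂ t := hcross t s hts
      rw [← h2t, mul_zero] at h1
      have h1' : f₁ t * f₂ s ≤ f₁ t * 0 := by rw [mul_zero]; exact h1
      have h2s : f₂ s = 0 := le_antisymm (le_of_mul_le_mul_left h1' hf1t) (h₂0 s)
      show (0:ℝ) ≤ f₁ s - c * f₂ s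
      rw [h2s, mul_zero, sub_zero]; exact h₁0 s
    · -- f₂ t > 0
      have h1 : f₁ t * f₂ s ≤ f₁ s * f₂ t := hcross t s hts
      have h2 : c * f₂ s * f₂ t ≤ f₁ s * f₂ t := by nlinarith [h₂0 s]
      have h3 := le_of_mul_le_mul_right h2 h2t
      show (0:ℝ) ≤ f₁ s - c * f₂ s
      linarith
  -- decompose ∫_B g
  have hsplit : (∫ x in B ∩ U, g x) + (∫ x in B \ U, g x) = ∫ x in B, g x :=
    integral_inter_add_diff (s := B) hU hg_int.integrableOn
  have hneg : (∫ x in B \ U, g x) ≤ 0 := by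
    refine setIntegral_nonpos (hB.diff hU) fun x hx => ?_
    have hx2 : ¬ (0 < g x) := hx.2
    linarith [not_lt.mp hx2]
  have hstep1 : (∫ x in B, g x) ≤ ∫ x in B ∩ U, g x := by linarith
  -- bound ∫_{B∩U} g by δ'
  have hbound : (∫ x in B ∩ U, g x) ≤ δ' := by
    rcases Set.eq_empty_or_nonempty U with hUe | hUne
    · simp [hUe, hδ]
    by_cases hbb : BddBelow U
    · set t₀ := sInf U with ht₀
      have hpos : ∀ x ∈ Set.Ioi t₀, 0 ≤ g x := by
        intro x hx
        obtain ⟨u, hu, hux⟩ := (csInf_lt_iff hbb hUne).mp hx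
        exact hup u hu x hux.le
      have hsub : (B ∩ U : Set ℝ) ≤ᶠ[ae volume] (Set.Ioi t₀ : Set ℝ) := by
        have h0 : ∀ᵐ x : ℝ ∂volume, x ≠ t₀ := by
          have hs : volume ({t₀} : Set ℝ) = 0 := Real.volume_singleton
          simpa [ae_iff] using hs
        filter_upwards [h0] with x hx hxBU
        have hle : t₀ ≤ x := csInf_le hbb hxBU.2
        exact lt_of_le_of_ne hle (Ne.symm hx)
      have hmono : (∫ x in B ∩ U, g x) ≤ ∫ x in Set.Ioi t₀, g x := by
        refine setIntegral_mono_set hg_int.integrableOn ?_ hsub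
        exact (ae_restrict_iff' measurableSet_Ioi).mpr (Filter.Eventually.of_forall hpos)
      have hval : (∫ x in Set.Ioi t₀, g x)
          = (∫ x in Set.Ioi t₀, f₁ x) - c * ∫ x in Set.Ioi t₀, f₂ x := by
        rw [integral_sub hi₁.integrableOn ((hi₂.const_mul c).integrableOn),
          integral_const_mul]
      rw [hval] at hmono
      linarith [hhalf t₀]
    · -- U unbounded below: g ≥ 0 everywhere
      have hpos : ∀ x : ℝ, 0 ≤ g x := by
        intro x
        obtain ⟨u, hu, hux⟩ : ∃ u ∈ U, u ≤ x := by
          by_contra hcon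
          push_neg at hcon
          exact hbb ⟨x, fun u hu => (hcon u hu).le⟩
        exact hup u hu x hux
      have hmono : (∫ x in B ∩ U, g x) ≤ ∫ x, g x :=
        setIntegral_le_integral hg_int (Filter.Eventually.of_forall hpos)
      have hval : (∫ x, g x) = (∫ x, f₁ x) - c * ∫ x, f₂ x := by
        rw [integral_sub hi₁ (hi₂.const_mul c), integral_const_mul]
      rw [hval] at hmono
      linarith
  have hval : (∫ x in B, g x) = (∫ x in B, f₁ x) - c * ∫ x in B, f₂ x := by
    rw [integral_sub hi₁.integrableOn ((hi₂.const_mul c).integrableOn), integral_const_mul]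
  rw [hval] at hstep1
  linarith

/-- Core single-crossing lemma, decreasing likelihood ratio case. -/
lemma key_down (f₁ f₂ : ℝ → ℝ) (h₁0 : ∀ t, 0 ≤ f₁ t) (h₂0 : ∀ t, 0 ≤ f₂ t)
    (hi₁ : Integrable f₁) (hi₂ : Integrable f₂) (hm₁ : Measurable f₁) (hm₂ : Measurable f₂)
    (c δ' : ℝ) (hc : 0 ≤ c) (hδ : 0 ≤ δ')
    (hcross : ∀ s t, s ≤ t → f₁ t * f₂ s ≤ f₁ s * f₂ t)
    (hhalf : ∀ t : ℝ, (∫ x in Set.Iio t, f₁ x) ≤ c * (∫ x in Set.Iio t, f₂ x) + δ')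
    (htot : (∫ x, f₁ x) ≤ c * (∫ x, f₂ x) + δ')
    (B : Set ℝ) (hB : MeasurableSet B) :
    (∫ x in B, f₁ x) ≤ c * (∫ x in B, f₂ x) + δ' := by
  set g : ℝ → ℝ := fun x => f₁ x - c * f₂ x with hg_def
  have hg_int : Integrable g := hi₁.sub (hi₂.const_mul c)
  have hg_meas : Measurable g := hm₁.sub (hm₂.const_mul c)
  set U : Set ℝ := {x | 0 < g x} with hU_def
  have hU : MeasurableSet U := measurableSet_lt measurable_const hg_meas
  have hup : ∀ t ∈ U, ∀ s, s ≤ t → 0 ≤ g s := by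
    intro t ht s hts
    have hgt : c * f₂ t < f₁ t := sub_pos.mp ht
    rcases eq_or_lt_of_le (h₂0 t) with h2t | h2t
    · have hf1t : 0 < f₁ t := by nlinarith
      have h1 : f₁ t * f₂ s ≤ f₁ s * f₂ t := hcross s t hts
      rw [← h2t, mul_zero] at h1
      have h1' : f₁ t * f₂ s ≤ f₁ t * 0 := by rw [mul_zero]; exact h1
      have h2s : f₂ s = 0 := le_antisymm (le_of_mul_le_mul_left h1' hf1t) (h₂0 s)
      show (0:ℝ) ≤ f₁ s - c * f₂ s
      rw [h2s, mul_zero, sub_zero]; exact h₁0 s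
    · have h1 : f₁ t * f₂ s ≤ f₁ s * f₂ t := hcross s t hts
      have h2 : c * f₂ s * f₂ t ≤ f₁ s * f₂ t := by nlinarith [h₂0 s]
      have h3 := le_of_mul_le_mul_right h2 h2t
      show (0:ℝ) ≤ f₁ s - c * f₂ s
      linarith
  have hsplit : (∫ x in B ∩ U, g x) + (∫ x in B \ U, g x) = ∫ x in B, g x :=
    integral_inter_add_diff (s := B) hU hg_int.integrableOn
  have hneg : (∫ x in B \ U, g x) ≤ 0 := by
    refine setIntegral_nonpos (hB.diff hU) fun x hx => ?_
    have hx2 : ¬ (0 < g x) := hx.2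
    linarith [not_lt.mp hx2]
  have hstep1 : (∫ x in B, g x) ≤ ∫ x in B ∩ U, g x := by linarith
  have hbound : (∫ x in B ∩ U, g x) ≤ δ' := by
    rcases Set.eq_empty_or_nonempty U with hUe | hUne
    · simp [hUe, hδ]
    by_cases hbb : BddAbove U
    · set t₀ := sSup U with ht₀
      have hpos : ∀ x ∈ Set.Iio t₀, 0 ≤ g x := by
        intro x hx
        obtain ⟨u, hu, hux⟩ := (lt_csSup_iff hbb hUne).mp hx
        exact hup u hu x hux.le
      have hsub : (B ∩ U : Set ℝ) ≤ᶠ[ae volume] (Set.Iio t₀ : Set ℝ) := by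
        have h0 : ∀ᵐ x : ℝ ∂volume, x ≠ t₀ := by
          have hs : volume ({t₀} : Set ℝ) = 0 := Real.volume_singleton
          simpa [ae_iff] using hs
        filter_upwards [h0] with x hx hxBU
        have hle : x ≤ t₀ := le_csSup hbb hxBU.2
        exact lt_of_le_of_ne hle hx
      have hmono : (∫ x in B ∩ U, g x) ≤ ∫ x in Set.Iio t₀, g x := by
        refine setIntegral_mono_set hg_int.integrableOn ?_ hsub
        exact (ae_restrict_iff' measurableSet_Iio).mpr (Filter.Eventually.of_forall hpos)
      have hval : (∫ x in Set.Iio t₀, g x)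
          = (∫ x in Set.Iio t₀, f₁ x) - c * ∫ x in Set.Iio t₀, f₂ x := by
        rw [integral_sub hi₁.integrableOn ((hi₂.const_mul c).integrableOn),
          integral_const_mul]
      rw [hval] at hmono
      linarith [hhalf t₀]
    · have hpos : ∀ x : ℝ, 0 ≤ g x := by
        intro x
        obtain ⟨u, hu, hux⟩ : ∃ u ∈ U, x ≤ u := by
          by_contra hcon
          push_neg at hcon
          exact hbb ⟨x, fun u hu => (hcon u hu).le⟩
        exact hup u hu x hux
      have hmono : (∫ x in B ∩ U, g x) ≤ ∫ x, g x :=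
        setIntegral_le_integral hg_int (Filter.Eventually.of_forall hpos)
      have hval : (∫ x, g x) = (∫ x, f₁ x) - c * ∫ x, f₂ x := by
        rw [integral_sub hi₁ (hi₂.const_mul c), integral_const_mul]
      rw [hval] at hmono
      linarith
  have hval : (∫ x in B, g x) = (∫ x in B, f₁ x) - c * ∫ x in B, f₂ x := by
    rw [integral_sub hi₁.integrableOn ((hi₂.const_mul c).integrableOn), integral_const_mul]
  rw [hval] at hstep1
  linarith

lemma ofReal_delta_eq (δ : ℝ) : ENNReal.ofReal δ = ENNReal.ofReal (max δ 0) := by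
  rcases le_total δ 0 with h | h
  · rw [ENNReal.ofReal_of_nonpos h, max_eq_right h]; simp
  · rw [max_eq_left h]

/-- Translation of the ENNReal DP inequality into a real one. -/
lemma ennreal_ineq_iff (a b c δ : ℝ) (hb : 0 ≤ b) (hc : 0 ≤ c) :
    (ENNReal.ofReal a ≤ ENNReal.ofReal c * ENNReal.ofReal b + ENNReal.ofReal δ ↔
      a ≤ c * b + max δ 0) := by
  rw [ofReal_delta_eq δ, ← ENNReal.ofReal_mul hc,
    ← ENNReal.ofReal_add (mul_nonneg hc hb) (le_max_right δ 0),
    ENNReal.ofReal_le_ofReal_iff (by positivity)]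

theorem dp_iff_halflines {𝒳 : Type*} [DecidableEq 𝒳] {n : ℕ} (ε δ : ℝ)
    (T : (Fin n → 𝒳) → ℝ) (μ : (Fin n → 𝒳) → Measure ℝ)
    [∀ X, IsProbabilityMeasure (μ X)]
    (f : (Fin n → 𝒳) → ℝ → ℝ) (hf0 : ∀ X t, 0 ≤ f X t) (hfm : ∀ X, Measurable (f X))
    (hdens : ∀ X, μ X = MeasureTheory.volume.withDensity (fun t => ENNReal.ofReal (f X t)))
    (hparam : ∀ X₁ X₂, T X₁ = T X₂ → μ X₁ = μ X₂)
    (hMLR : ∀ X₁ X₂, T X₂ ≤ T X₁ → ∀ s t : ℝ, s ≤ t →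
      f X₁ s * f X₂ t ≤ f X₁ t * f X₂ s) :
    ((∀ X₁ X₂ : Fin n → 𝒳, hammingDist X₁ X₂ = 1 → ∀ B : Set ℝ, MeasurableSet B →
        μ X₁ B ≤ ENNReal.ofReal (Real.exp ε) * μ X₂ B + ENNReal.ofReal δ) ↔
      (∀ X₁ X₂ : Fin n → 𝒳, hammingDist X₁ X₂ = 1 → ∀ t : ℝ,
        μ X₁ (Set.Iio t) ≤ ENNReal.ofReal (Real.exp ε) * μ X₂ (Set.Iio t) + ENNReal.ofReal δ ∧
        μ X₁ (Set.Ioi t) ≤ ENNReal.ofReal (Real.exp ε) * μ X₂ (Set.Ioi t) + ENNReal.ofReal δ)) := by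
  constructor
  · intro h X₁ X₂ hn t
    exact ⟨h X₁ X₂ hn _ measurableSet_Iio, h X₁ X₂ hn _ measurableSet_Ioi⟩
  · intro h X₁ X₂ hn B hB
    have hc : 0 ≤ Real.exp ε := (Real.exp_pos ε).le
    have hδ' : 0 ≤ max δ 0 := le_max_right δ 0
    -- integrability of the densities
    have hint : ∀ X : Fin n → 𝒳, Integrable (f X) := by
      intro X
      refine ⟨(hfm X).aestronglyMeasurable, ?_⟩
      rw [HasFiniteIntegral]
      have h1 : ∀ x, (‖f X x‖₊ : ENNReal) = ENNReal.ofReal (f X x) := fun x =>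
        Real.enorm_eq_ofReal (hf0 X x)
      calc ∫⁻ x, (‖f X x‖₊ : ENNReal) ∂volume = ∫⁻ x, ENNReal.ofReal (f X x) ∂volume := by
            simp_rw [h1]
        _ = μ X Set.univ := by
            rw [hdens X, withDensity_apply _ MeasurableSet.univ, Measure.restrict_univ]
        _ = 1 := measure_univ
        _ < ⊤ := ENNReal.one_lt_top
    -- representation of μ X A
    have hrep : ∀ (X : Fin n → 𝒳) (A : Set ℝ), MeasurableSet A →
        μ X A = ENNReal.ofReal (∫ x in A, f X x) := by
      intro X A hA
      rw [hdens X, withDensity_apply _ hA,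
        ← ofReal_integral_eq_lintegral_ofReal (hint X).integrableOn
          (Filter.Eventually.of_forall fun x => hf0 X x)]
    have hnn : ∀ (X : Fin n → 𝒳) (A : Set ℝ), 0 ≤ ∫ x in A, f X x := fun X A =>
      integral_nonneg (hf0 X)
    -- real versions of the half-line hypotheses
    have hIio : ∀ t : ℝ,
        (∫ x in Set.Iio t, f X₁ x) ≤ Real.exp ε * (∫ x in Set.Iio t, f X₂ x) + max δ 0 := by
      intro t
      have h' := (h X₁ X₂ hn t).1
      rw [hrep X₁ _ measurableSet_Iio, hrep X₂ _ measurableSet_Iio] at h'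
      exact (ennreal_ineq_iff _ _ _ _ (hnn X₂ _) hc).mp h'
    have hIoi : ∀ t : ℝ,
        (∫ x in Set.Ioi t, f X₁ x) ≤ Real.exp ε * (∫ x in Set.Ioi t, f X₂ x) + max δ 0 := by
      intro t
      have h' := (h X₁ X₂ hn t).2
      rw [hrep X₁ _ measurableSet_Ioi, hrep X₂ _ measurableSet_Ioi] at h'
      exact (ennreal_ineq_iff _ _ _ _ (hnn X₂ _) hc).mp h'
    -- total integrals are 1
    have hone : ∀ X : Fin n → 𝒳, (∫ x, f X x) = 1 := by
      intro X
      refine ENNReal.ofReal_eq_one.mp ?_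
      rw [ofReal_integral_eq_lintegral_ofReal (hint X)
        (Filter.Eventually.of_forall fun x => hf0 X x)]
      calc ∫⁻ x, ENNReal.ofReal (f X x) ∂volume
          = μ X Set.univ := by
            rw [hdens X, withDensity_apply _ MeasurableSet.univ, Measure.restrict_univ]
        _ = 1 := measure_univ
    -- whole-line inequality: 1 ≤ exp ε + max δ 0
    have htot1 : (1 : ℝ) ≤ Real.exp ε + max δ 0 := by
      have hcup : (⋃ m : ℕ, Set.Iio (m : ℝ)) = Set.univ := by
        ext x
        simp only [Set.mem_iUnion, Set.mem_Iio, Set.mem_univ, iff_true]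
        obtain ⟨m, hm⟩ := exists_nat_gt x
        exact ⟨m, hm⟩
      have hdir : Directed (fun x1 x2 : Set ℝ => x1 ⊆ x2) (fun m : ℕ => Set.Iio (m : ℝ)) := by
        refine Monotone.directed_le ?_
        intro a b hab
        exact Set.Iio_subset_Iio (by exact_mod_cast hab)
      have h1 : (1 : ENNReal) = ⨆ m : ℕ, μ X₁ (Set.Iio (m : ℝ)) := by
        rw [← measure_univ (μ := μ X₁), ← hcup, hdir.measure_iUnion]
      have h2 : (1 : ENNReal) ≤ ENNReal.ofReal (Real.exp ε) + ENNReal.ofReal δ := by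
        rw [h1]
        refine iSup_le fun m => ?_
        calc μ X₁ (Set.Iio (m : ℝ))
            ≤ ENNReal.ofReal (Real.exp ε) * μ X₂ (Set.Iio (m : ℝ)) + ENNReal.ofReal δ :=
              (h X₁ X₂ hn (m : ℝ)).1
          _ ≤ ENNReal.ofReal (Real.exp ε) * 1 + ENNReal.ofReal δ := by
              gcongr
              exact prob_le_one
          _ = ENNReal.ofReal (Real.exp ε) + ENNReal.ofReal δ := by rw [mul_one]
      have h3 : ENNReal.ofReal (1 : ℝ) ≤ ENNReal.ofReal (Real.exp ε + max δ 0) := by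
        rw [ENNReal.ofReal_one]
        calc (1 : ENNReal) ≤ ENNReal.ofReal (Real.exp ε) + ENNReal.ofReal δ := h2
          _ = ENNReal.ofReal (Real.exp ε + max δ 0) := by
              rw [ofReal_delta_eq δ, ← ENNReal.ofReal_add hc hδ']
      exact (ENNReal.ofReal_le_ofReal_iff (by positivity)).mp h3
    have htot : (∫ x, f X₁ x) ≤ Real.exp ε * (∫ x, f X₂ x) + max δ 0 := by
      rw [hone X₁, hone X₂, mul_one]
      exact htot1
    -- conclude by MLR cases
    have key : (∫ x in B, f X₁ x) ≤ Real.exp ε * (∫ x in B, f X₂ x) + max δ 0 := by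
      rcases le_total (T X₂) (T X₁) with hT | hT
      · exact key_up (f X₁) (f X₂) (hf0 X₁) (hf0 X₂) (hint X₁) (hint X₂) (hfm X₁) (hfm X₂)
          (Real.exp ε) (max δ 0) hc hδ' (fun s t hst => hMLR X₁ X₂ hT s t hst) hIoi htot B hB
      · refine key_down (f X₁) (f X₂) (hf0 X₁) (hf0 X₂) (hint X₁) (hint X₂) (hfm X₁) (hfm X₂)
          (Real.exp ε) (max δ 0) hc hδ' (fun s t hst => ?_) hIio htot B hB
        have h' := hMLR X₂ X₁ hT s t hst
        nlinarith [h']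
    rw [hrep X₁ B hB, hrep X₂ B hB]
    exact (ennreal_ineq_iff _ _ _ _ (hnn X₂ _) hc).mpr key
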